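/- (Fejér monotonicity of PGM-ISTA) Let f(x) = ½‖y − Ax‖₂², g₁(x) = λ₁‖x‖₁, g₂(x) = λ₂‖Dx‖₁ with A ∈ ℝ^{m×n}, m < n. Fix u ∈ (0, 2/‖A‖₂²) and t ∈ (0, u]. Define the iteration x^{k+1} = prox_{t g₂}( x^k − t·G(x^k) ) where G(x) = (1/u)(x − prox_{u g₁}(x − u∇f(x))). If x* is any fixed point of this iteration map, then for every k, ‖x^{k+1} − x*‖₂ ≤ ‖x^k − x*‖₂. -/

import Mathlib

open scoped RealInnerProductSpace Matrix

noncomputable def l2 {ι : Type*} [Fintype ι] (x : ι → ℝ) : ℝ :=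
  Real.sqrt (∑ i, (x i)^2)

noncomputable def l1 {ι : Type*} [Fintype ι] (x : ι → ℝ) : ℝ :=
  ∑ i, |x i|

/-- Componentwise soft-threshold operator (the prox of the ℓ¹-norm). -/
noncomputable def soft {ι : Type*} [Fintype ι] (lam : ℝ) (x : ι → ℝ) : ι → ℝ :=
  fun i => Real.sign (x i) * max 0 (|x i| - lam)

/-- The finite difference matrix `D ∈ ℝ^{n×(n+1)}` with `(Dx)_i = x_{i+1} - x_i`. -/
def Dmat (n : ℕ) : Matrix (Fin n) (Fin (n+1)) ℝ :=
  Matrix.of fun i j => if j = i.succ then 1 else if j = i.castSucc then (-1) else 0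

/-- The spectral (ℓ²-operator) norm of a matrix. -/
noncomputable def spec {m n : ℕ} (A : Matrix (Fin m) (Fin n) ℝ) : ℝ :=
  ‖(Matrix.toEuclideanLin A).toContinuousLinearMap‖

section helpers

variable {N : Type*} [Fintype N]

lemma l2_eq_norm (x : N → ℝ) : l2 x = ‖(WithLp.equiv 2 (N → ℝ)).symm x‖ := by
  simp [l2, EuclideanSpace.norm_eq, Real.norm_eq_abs, sq_abs]

lemma dot_eq_inner (v w : N → ℝ) :
    v ⬝ᵥ w = ⟪(WithLp.equiv 2 (N → ℝ)).symm v, (WithLp.equiv 2 (N → ℝ)).symm w⟫ := by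
  simp [PiLp.inner_apply, RCLike.inner_apply, dotProduct, mul_comm]

lemma l2_nonneg (v : N → ℝ) : 0 ≤ l2 v := Real.sqrt_nonneg _

lemma l2_sq (v : N → ℝ) : (l2 v)^2 = v ⬝ᵥ v := by
  rw [l2, Real.sq_sqrt (Finset.sum_nonneg fun i _ => sq_nonneg _)]
  simp [dotProduct, sq]

lemma dot_le_l2 (v w : N → ℝ) : v ⬝ᵥ w ≤ l2 v * l2 w := by
  rw [dot_eq_inner, l2_eq_norm, l2_eq_norm]
  exact real_inner_le_norm _ _

lemma l2_le_of_sq_le {v w : N → ℝ} (h : (l2 v)^2 ≤ (l2 w)^2) : l2 v ≤ l2 w := by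
  rw [← Real.sqrt_sq (l2_nonneg v), ← Real.sqrt_sq (l2_nonneg w)]
  exact Real.sqrt_le_sqrt h

lemma l2_comp_le {f g : N → ℝ} (h : ∀ i, |f i| ≤ |g i|) : l2 f ≤ l2 g := by
  apply Real.sqrt_le_sqrt
  apply Finset.sum_le_sum
  intro i _
  rw [← sq_abs (f i), ← sq_abs (g i)]
  exact pow_le_pow_left₀ (abs_nonneg _) (h i) 2

lemma l2_triangle (v w : N → ℝ) : l2 (v + w) ≤ l2 v + l2 w := by
  rw [l2_eq_norm, l2_eq_norm, l2_eq_norm]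
  rw [show (WithLp.equiv 2 (N → ℝ)).symm (v + w)
      = (WithLp.equiv 2 (N → ℝ)).symm v + (WithLp.equiv 2 (N → ℝ)).symm w from rfl]
  exact norm_add_le _ _

lemma l2_smul (c : ℝ) (v : N → ℝ) : l2 (c • v) = |c| * l2 v := by
  rw [l2_eq_norm, l2_eq_norm]
  rw [show (WithLp.equiv 2 (N → ℝ)).symm (c • v)
      = c • (WithLp.equiv 2 (N → ℝ)).symm v from rfl]
  rw [norm_smul, Real.norm_eq_abs]

lemma l2_sq_add_smul (a b : N → ℝ) (s : ℝ) :
    (l2 (a + s • b))^2 = (l2 a)^2 + 2*s*(a ⬝ᵥ b) + s^2*(l2 b)^2 := by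
  rw [l2_sq, l2_sq, l2_sq]
  simp only [dotProduct, Pi.add_apply, Pi.smul_apply, smul_eq_mul]
  rw [Finset.mul_sum, Finset.mul_sum, ← Finset.sum_add_distrib, ← Finset.sum_add_distrib]
  exact Finset.sum_congr rfl fun i _ => by ring

lemma spec_nonneg {m n : ℕ} (A : Matrix (Fin m) (Fin n) ℝ) : 0 ≤ spec A :=
  norm_nonneg _

lemma mulVec_l2_le {m n : ℕ} (A : Matrix (Fin m) (Fin n) ℝ) (v : Fin n → ℝ) :
    l2 (A.mulVec v) ≤ spec A * l2 v := by
  rw [l2_eq_norm, l2_eq_norm]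
  have h := ContinuousLinearMap.le_opNorm
    (Matrix.toEuclideanLin A).toContinuousLinearMap ((WithLp.equiv 2 (Fin n → ℝ)).symm v)
  rw [show ((Matrix.toEuclideanLin A).toContinuousLinearMap : _ → _)
        ((WithLp.equiv 2 (Fin n → ℝ)).symm v)
      = (WithLp.equiv 2 (Fin m → ℝ)).symm (A.mulVec v) from rfl] at h
  exact h

lemma transpose_dot {m n : ℕ} (A : Matrix (Fin m) (Fin n) ℝ) (w : Fin m → ℝ) (v : Fin n → ℝ) :
    (A.transpose.mulVec w) ⬝ᵥ v = w ⬝ᵥ (A.mulVec v) := by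
  rw [Matrix.mulVec_transpose, Matrix.dotProduct_mulVec]

lemma contract {m n : ℕ} (A : Matrix (Fin m) (Fin n) ℝ) (u : ℝ) (hu0 : 0 < u)
    (hu2 : u * (spec A)^2 ≤ 2) (v : Fin n → ℝ) :
    l2 (v - u • (A.transpose.mulVec (A.mulVec v))) ≤ l2 v := by
  set b := A.mulVec v with hb
  set w := A.transpose.mulVec b with hw
  have hwv : v ⬝ᵥ w = (l2 b)^2 := by
    have e : v ⬝ᵥ w = b ⬝ᵥ b := by
      rw [dotProduct_comm, hw, transpose_dot, ← hb]
    rw [e]; exact (l2_sq b).symm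
  have hwnorm : l2 w ≤ spec A * l2 b := by
    rcases eq_or_lt_of_le (l2_nonneg w) with h0 | h0
    · rw [← h0]; exact mul_nonneg (spec_nonneg A) (l2_nonneg b)
    · have h1 : (l2 w)^2 = b ⬝ᵥ (A.mulVec w) := by rw [l2_sq, hw, transpose_dot]
      have h2 : b ⬝ᵥ (A.mulVec w) ≤ l2 b * (spec A * l2 w) :=
        (dot_le_l2 _ _).trans (mul_le_mul_of_nonneg_left (mulVec_l2_le A w) (l2_nonneg b))
      nlinarith [h1 ▸ h2, h0]
  have hexp : (l2 (v - u • w))^2 = (l2 v)^2 - 2*u*((l2 b)^2) + u^2*(l2 w)^2 := by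
    have e : v - u • w = v + (-u) • w := by module
    rw [e, l2_sq_add_smul, hwv]; ring
  apply l2_le_of_sq_le
  rw [hexp]
  have h3 : (l2 w)^2 ≤ (spec A)^2 * (l2 b)^2 := by
    nlinarith [hwnorm, l2_nonneg w, l2_nonneg b, spec_nonneg A]
  nlinarith [mul_le_mul_of_nonneg_left h3 (sq_nonneg u),
    mul_le_mul_of_nonneg_left hu2 (mul_nonneg hu0.le (sq_nonneg (l2 b)))]

lemma soft_eq_clip (c s : ℝ) (hc : 0 ≤ c) :
    Real.sign s * max 0 (|s| - c) = s - max (-c) (min c s) := by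
  rcases lt_trichotomy s 0 with h | h | h
  · rw [Real.sign_of_neg h, abs_of_neg h]
    rcases le_total (-c) s with h2 | h2
    · rw [max_eq_left (by linarith), min_eq_right (by linarith), max_eq_right h2]; ring
    · rw [max_eq_right (by linarith), min_eq_right (by linarith), max_eq_left h2]; ring
  · subst h
    simp [Real.sign_zero, min_eq_right hc, max_eq_right (neg_nonpos.mpr hc)]
  · rw [Real.sign_of_pos h, abs_of_pos h]
    rcases le_total s c with h2 | h2
    · rw [max_eq_left (by linarith), min_eq_right h2, max_eq_right (by linarith)]; ring
    · rw [max_eq_right (by linarith), min_eq_left h2, max_eq_right (by linarith)]; ring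

lemma soft_lip (c : ℝ) (hc : 0 ≤ c) (a b : ℝ) :
    |Real.sign a * max 0 (|a| - c) - Real.sign b * max 0 (|b| - c)| ≤ |a - b| := by
  rw [soft_eq_clip c a hc, soft_eq_clip c b hc]
  have key : ∀ x y : ℝ, x ≤ y →
      |(x - max (-c) (min c x)) - (y - max (-c) (min c y))| ≤ |x - y| := by
    intro x y hxy
    have m1 : max (-c) (min c x) ≤ max (-c) (min c y) :=
      max_le_max le_rfl (min_le_min le_rfl hxy)
    have m2 : max (-c) (min c y) ≤ max (-c) (min c x) + (y - x) := by
      have hmin : min c y ≤ min c x + (y - x) := by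
        rcases le_total c x with h | h
        · rw [min_eq_left h]; exact le_trans (min_le_left _ _) (by linarith)
        · rw [min_eq_right h]; exact le_trans (min_le_right _ _) (by linarith)
      calc max (-c) (min c y) ≤ max (-c + (y - x)) (min c x + (y - x)) :=
            max_le_max (by linarith) hmin
        _ = max (-c) (min c x) + (y - x) := by rw [max_add_add_right]
    rw [abs_of_nonpos (sub_nonpos.mpr hxy), neg_sub, abs_le]
    constructor <;> linarith
  rcases le_total a b with hab | hab
  · exact key a b hab
  · rw [abs_sub_comm, abs_sub_comm a b]; exact key b a hab

lemma l1_convex (a b : N → ℝ) (s : ℝ) (h0 : 0 ≤ s) (h1 : s ≤ 1) :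
    l1 (a + s • (b - a)) ≤ (1-s) * l1 a + s * l1 b := by
  rw [l1, l1, l1, Finset.mul_sum, Finset.mul_sum, ← Finset.sum_add_distrib]
  apply Finset.sum_le_sum
  intro i _
  simp only [Pi.add_apply, Pi.smul_apply, Pi.sub_apply, smul_eq_mul]
  calc |a i + s * (b i - a i)| = |(1-s) * a i + s * b i| := by ring_nf
    _ ≤ |(1-s) * a i| + |s * b i| := abs_add_le _ _
    _ = (1-s) * |a i| + s * |b i| := by
        rw [abs_mul, abs_mul, abs_of_nonneg (by linarith : (0:ℝ) ≤ 1 - s), abs_of_nonneg h0]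

lemma prox_subgrad (h : (N → ℝ) → ℝ)
    (hconv : ∀ p q : N → ℝ, ∀ s : ℝ, 0 ≤ s → s ≤ 1 →
      h (p + s • (q - p)) ≤ (1-s) * h p + s * h q)
    (z p : N → ℝ)
    (hmin : ∀ w, h p + (1/2) * (l2 (p - z))^2 ≤ h w + (1/2) * (l2 (w - z))^2)
    (q : N → ℝ) : h p + (z - p) ⬝ᵥ (q - p) ≤ h q := by
  have key : ∀ s : ℝ, 0 < s → s ≤ 1 →
      h p - h q - (p - z) ⬝ᵥ (q - p) ≤ s * ((1/2) * (l2 (q - p))^2) := by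
    intro s hs hs1
    have H := hmin (p + s • (q - p))
    have hc := hconv p q s hs.le hs1
    have hexp : (l2 (p + s • (q - p) - z))^2
        = (l2 (p - z))^2 + 2*s*((p - z) ⬝ᵥ (q - p)) + s^2*(l2 (q - p))^2 := by
      have e : p + s • (q - p) - z = (p - z) + s • (q - p) := by module
      rw [e, l2_sq_add_smul]
    rw [hexp] at H
    have h0 : 0 ≤ s * ((h q - h p) + (p - z) ⬝ᵥ (q - p) + s * ((1/2) * (l2 (q - p))^2)) := by
      nlinarith [H, hc]
    have hX : (0:ℝ) ≤ (h q - h p) + (p - z) ⬝ᵥ (q - p) + s * ((1/2) * (l2 (q - p))^2) := by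
      nlinarith [h0, hs]
    linarith
  by_contra hcon
  push_neg at hcon
  have hzp : (z - p) ⬝ᵥ (q - p) = -((p - z) ⬝ᵥ (q - p)) := by
    rw [show z - p = -(p - z) from by module, neg_dotProduct]
  rw [hzp] at hcon
  set ε := h p - h q - (p - z) ⬝ᵥ (q - p) with hε
  have hεpos : 0 < ε := by rw [hε]; linarith
  set C := (1/2) * (l2 (q - p))^2 with hC
  have hC0 : 0 ≤ C := by positivity
  have hs1 : (0:ℝ) < min 1 (ε / (C + 1)) := by
    apply lt_min one_pos
    positivity
  have hs2 : min 1 (ε / (C + 1)) ≤ 1 := min_le_left _ _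
  have hk := key _ hs1 hs2
  have : min 1 (ε / (C + 1)) * C ≤ (ε / (C + 1)) * C :=
    mul_le_mul_of_nonneg_right (min_le_right _ _) hC0
  have hlt : (ε / (C + 1)) * C < ε := by
    rw [div_mul_eq_mul_div, div_lt_iff₀ (by linarith)]
    nlinarith
  linarith

lemma prox_nonexp (h : (N → ℝ) → ℝ)
    (hconv : ∀ p q : N → ℝ, ∀ s : ℝ, 0 ≤ s → s ≤ 1 →
      h (p + s • (q - p)) ≤ (1-s) * h p + s * h q)
    (z z' p p' : N → ℝ)
    (hmin : ∀ w, h p + (1/2) * (l2 (p - z))^2 ≤ h w + (1/2) * (l2 (w - z))^2)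
    (hmin' : ∀ w, h p' + (1/2) * (l2 (p' - z'))^2 ≤ h w + (1/2) * (l2 (w - z'))^2) :
    l2 (p - p') ≤ l2 (z - z') := by
  have h1 := prox_subgrad h hconv z p hmin p'
  have h2 := prox_subgrad h hconv z' p' hmin' p
  have hdot : (p - p') ⬝ᵥ (p - p') ≤ (z - z') ⬝ᵥ (p - p') := by
    have e : (z - z') ⬝ᵥ (p - p') - (p - p') ⬝ᵥ (p - p')
        = ((z - p) ⬝ᵥ (p' - p)) * (-1) + ((z' - p') ⬝ᵥ (p - p')) * (-1) := by
      simp only [dotProduct, Pi.sub_apply, Finset.sum_mul, ← Finset.sum_sub_distrib,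
        ← Finset.sum_add_distrib]
      exact Finset.sum_congr rfl fun i _ => by ring
    nlinarith [h1, h2, e]
  have hcs : (z - z') ⬝ᵥ (p - p') ≤ l2 (z - z') * l2 (p - p') := dot_le_l2 _ _
  have hsq : (l2 (p - p'))^2 ≤ l2 (z - z') * l2 (p - p') := by
    rw [l2_sq]; linarith
  rcases eq_or_lt_of_le (l2_nonneg (p - p')) with h0 | h0
  · rw [← h0]; exact l2_nonneg _
  · nlinarith [hsq, h0]

end helpers

theorem pgm_ista_fejer_monotone {m n : ℕ} (A : Matrix (Fin m) (Fin (n+1)) ℝ)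
    (hmn : m < n + 1) (y : Fin m → ℝ) (lam1 lam2 : ℝ)
    (h1 : 0 ≤ lam1) (h2 : 0 ≤ lam2)
    (u t : ℝ) (hu0 : 0 < u) (hu2 : u < 2 / (spec A)^2) (ht0 : 0 < t) (htu : t ≤ u)
    (p2 : (Fin (n+1) → ℝ) → (Fin (n+1) → ℝ))
    (hp2 : ∀ z w : Fin (n+1) → ℝ,
      t * (lam2 * l1 ((Dmat n).mulVec (p2 z))) + (1/2) * (l2 (p2 z - z))^2 ≤
        t * (lam2 * l1 ((Dmat n).mulVec w)) + (1/2) * (l2 (w - z))^2)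
    (G : (Fin (n+1) → ℝ) → (Fin (n+1) → ℝ))
    (hG : ∀ z, G z = (1/u) •
      (z - soft (lam1 * u) (z - u • (A.transpose.mulVec (A.mulVec z - y)))))
    (xs : ℕ → (Fin (n+1) → ℝ))
    (hxs : ∀ k, xs (k+1) = p2 (xs k - t • G (xs k)))
    (xstar : Fin (n+1) → ℝ)
    (hfix : p2 (xstar - t • G xstar) = xstar) :
    ∀ k, l2 (xs (k+1) - xstar) ≤ l2 (xs k - xstar) := by
  -- spectral step-size bound
  have huspec : u * (spec A)^2 ≤ 2 := by
    rcases eq_or_ne (spec A) 0 with hz | hz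
    · rw [hz]; norm_num
    · have hs2 : 0 < (spec A)^2 :=
        pow_pos (lt_of_le_of_ne (spec_nonneg A) (Ne.symm hz)) 2
      have := (lt_div_iff₀ hs2).mp hu2
      linarith
  -- the prox objective and its convexity
  set hfun : (Fin (n+1) → ℝ) → ℝ := fun w => t * (lam2 * l1 ((Dmat n).mulVec w)) with hhfun
  have hconv : ∀ p q : Fin (n+1) → ℝ, ∀ s : ℝ, 0 ≤ s → s ≤ 1 →
      hfun (p + s • (q - p)) ≤ (1-s) * hfun p + s * hfun q := by
    intro p q s hs0 hs1
    have hD : (Dmat n).mulVec (p + s • (q - p))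
        = (Dmat n).mulVec p + s • ((Dmat n).mulVec q - (Dmat n).mulVec p) := by
      rw [Matrix.mulVec_add, Matrix.mulVec_smul, Matrix.mulVec_sub]
    simp only [hhfun]
    rw [hD]
    have hl1 := l1_convex ((Dmat n).mulVec p) ((Dmat n).mulVec q) s hs0 hs1
    have hkey := mul_le_mul_of_nonneg_left hl1 (mul_nonneg ht0.le h2)
    nlinarith [hkey]
  have pnonexp : ∀ z z', l2 (p2 z - p2 z') ≤ l2 (z - z') := by
    intro z z'
    exact prox_nonexp hfun hconv z z' (p2 z) (p2 z') (hp2 z) (hp2 z')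
  -- nonexpansiveness of the forward step
  set S : (Fin (n+1) → ℝ) → (Fin (n+1) → ℝ) := soft (lam1 * u) with hS
  set T : (Fin (n+1) → ℝ) → (Fin (n+1) → ℝ) :=
    fun z => z - u • (A.transpose.mulVec (A.mulVec z - y)) with hT
  have hTlip : ∀ a b, l2 (T a - T b) ≤ l2 (a - b) := by
    intro a b
    have key : ∀ z, A.transpose.mulVec (A.mulVec z - y)
        = A.transpose.mulVec (A.mulVec z) - A.transpose.mulVec y :=
      fun z => Matrix.mulVec_sub _ _ _
    have e2 : A.transpose.mulVec (A.mulVec (a - b))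
        = A.transpose.mulVec (A.mulVec a) - A.transpose.mulVec (A.mulVec b) := by
      rw [Matrix.mulVec_sub, Matrix.mulVec_sub]
    have e : T a - T b = (a - b) - u • (A.transpose.mulVec (A.mulVec (a - b))) := by
      simp only [hT]
      rw [key a, key b, e2]
      module
    rw [e]
    exact contract A u hu0 huspec (a - b)
  have hSlip : ∀ a b, l2 (S a - S b) ≤ l2 (a - b) := by
    intro a b
    apply l2_comp_le
    intro i
    exact soft_lip (lam1 * u) (mul_nonneg h1 hu0.le) (a i) (b i)
  have hF : ∀ x, x - t • G x = (1 - t/u) • x + (t/u) • S (T x) := by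
    intro x
    rw [hG]
    funext i
    simp only [Pi.sub_apply, Pi.smul_apply, Pi.add_apply, smul_eq_mul, hS, hT]
    field_simp
    ring
  have hstep : ∀ x, l2 ((x - t • G x) - (xstar - t • G xstar)) ≤ l2 (x - xstar) := by
    intro x
    rw [hF x, hF xstar]
    have e : ((1 - t/u) • x + (t/u) • S (T x)) - ((1 - t/u) • xstar + (t/u) • S (T xstar))
        = (1 - t/u) • (x - xstar) + (t/u) • (S (T x) - S (T xstar)) := by module
    rw [e]
    have htri := l2_triangle ((1 - t/u) • (x - xstar)) ((t/u) • (S (T x) - S (T xstar)))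
    have hsm1 := l2_smul (1 - t/u) (x - xstar)
    have hsm2 := l2_smul (t/u) (S (T x) - S (T xstar))
    have htu1 : t/u ≤ 1 := (div_le_one hu0).mpr htu
    have htu0 : 0 ≤ t/u := div_nonneg ht0.le hu0.le
    rw [abs_of_nonneg (by linarith : (0:ℝ) ≤ 1 - t/u)] at hsm1
    rw [abs_of_nonneg htu0] at hsm2
    have hST : l2 (S (T x) - S (T xstar)) ≤ l2 (x - xstar) := (hSlip _ _).trans (hTlip _ _)
    have := mul_le_mul_of_nonneg_left hST htu0
    nlinarith [htri, hsm1, hsm2, this, l2_nonneg (x - xstar)]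
  intro k
  rw [hxs k]
  conv_lhs => rw [← hfix]
  exact (pnonexp _ _).trans (hstep (xs k))
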